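/- Let X be a real-valued random variable with characteristic function φ(t) = E[e^{itX}]. Then for every t ∈ ℝ, 4·H(X, t/(2π)) ≤ 1 − |φ(t)| ≤ 2π²·H(X, t/(2π)). -/

import Mathlib

open MeasureTheory

/-- Distance from a real number to the nearest integer. -/
noncomputable def distNearestInt (α : ℝ) : ℝ := |α - round α|

/-- `H(X,d) = E⟨X* d⟩²` where `X* = X - X'` is the symmetrisation of `X`; expressed via
the law `ν` of `X` as a double integral. -/
noncomputable def Hsym (ν : Measure ℝ) (d : ℝ) : ℝ :=
  ∫ x, ∫ y, distNearestInt ((x - y) * d) ^ 2 ∂ν ∂ν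

lemma measurable_distNearestInt : Measurable distNearestInt := by
  have h : distNearestInt = fun x : ℝ => |x - ((⌊x + 1/2⌋ : ℤ) : ℝ)| := by
    funext x; rw [distNearestInt, round_eq]
  rw [h]
  exact (measurable_id.sub ((measurable_from_top (f := (Int.cast : ℤ → ℝ))).comp
    (Int.measurable_floor.comp (measurable_id.add_const _)))).abs

lemma distNearestInt_le_half (α : ℝ) : distNearestInt α ≤ 1 / 2 := abs_sub_round α

lemma distNearestInt_nonneg (α : ℝ) : 0 ≤ distNearestInt α := abs_nonneg _

lemma cos_bounds (α : ℝ) :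
    8 * distNearestInt α ^ 2 ≤ 1 - Real.cos (2 * Real.pi * α) ∧
      1 - Real.cos (2 * Real.pi * α) ≤ 2 * Real.pi ^ 2 * distNearestInt α ^ 2 := by
  have hπ := Real.pi_pos
  set β := α - round α with hβdef
  have hb : distNearestInt α = |β| := rfl
  have hβ : |β| ≤ 1 / 2 := abs_sub_round α
  have hcos : Real.cos (2 * Real.pi * α) = Real.cos (2 * Real.pi * β) := by
    have h1 : 2 * Real.pi * α = 2 * Real.pi * β + (round α : ℤ) * (2 * Real.pi) := by
      rw [hβdef]; ring
    rw [h1, Real.cos_add_int_mul_two_pi]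
  have hsin : Real.cos (2 * Real.pi * β) = 1 - 2 * Real.sin (Real.pi * β) ^ 2 := by
    have h2 : 2 * Real.pi * β = 2 * (Real.pi * β) := by ring
    rw [h2, Real.cos_two_mul]
    have := Real.sin_sq_add_cos_sq (Real.pi * β)
    nlinarith
  have habs : Real.sin (Real.pi * β) ^ 2 = Real.sin (Real.pi * |β|) ^ 2 := by
    rcases abs_cases β with ⟨h, _⟩ | ⟨h, _⟩
    · rw [h]
    · rw [h]; rw [show Real.pi * -β = -(Real.pi * β) by ring, Real.sin_neg]; ring
  set b := |β| with hbdef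
  have hb0 : 0 ≤ b := abs_nonneg _
  have hbπ : Real.pi * b ≤ Real.pi / 2 := by nlinarith
  have hbπ0 : 0 ≤ Real.pi * b := by positivity
  have hsin_le : Real.sin (Real.pi * b) ≤ Real.pi * b := Real.sin_le hbπ0
  have hsin_ge : 2 * b ≤ Real.sin (Real.pi * b) := by
    have := Real.mul_le_sin hbπ0 hbπ
    have hπ' : (2 : ℝ) / Real.pi * (Real.pi * b) = 2 * b := by
      field_simp
    linarith [hπ' ▸ this]
  have hsin_nonneg : 0 ≤ Real.sin (Real.pi * b) := by linarith
  constructor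
  · rw [hcos, hsin, habs, hb]
    nlinarith
  · rw [hcos, hsin, habs, hb]
    nlinarith

lemma exp_I_re (r : ℝ) : (Complex.exp (Complex.I * r)).re = Real.cos r := by
  rw [mul_comm]; exact Complex.exp_ofReal_mul_I_re r

lemma norm_exp_I (r : ℝ) : ‖Complex.exp (Complex.I * r)‖ = 1 := by
  rw [Complex.norm_exp]
  simp

/-- Mukhin's bound: if `φ` is the characteristic function of `X`, then
`4 H(X, t/(2π)) ≤ 1 - |φ(t)| ≤ 2π² H(X, t/(2π))`. -/
theorem char_fun_bounds_via_Hsym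
    {Ω : Type*} [MeasurableSpace Ω] {μ : Measure Ω} [IsProbabilityMeasure μ]
    (X : Ω → ℝ) (hX : Measurable X) (t : ℝ) :
    4 * Hsym (μ.map X) (t / (2 * Real.pi)) ≤
        1 - ‖∫ ω, Complex.exp (Complex.I * (t * X ω)) ∂μ‖ ∧
      1 - ‖∫ ω, Complex.exp (Complex.I * (t * X ω)) ∂μ‖ ≤
        2 * Real.pi ^ 2 * Hsym (μ.map X) (t / (2 * Real.pi)) := by
  have hπ := Real.pi_pos
  set d : ℝ := t / (2 * Real.pi) with hd
  set ν : Measure ℝ := μ.map X with hν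
  haveI : IsProbabilityMeasure ν := Measure.isProbabilityMeasure_map hX.aemeasurable
  set P : Measure (ℝ × ℝ) := ν.prod ν with hP
  haveI : IsProbabilityMeasure P := by infer_instance
  set φ : ℂ := ∫ ω, Complex.exp (Complex.I * (t * X ω)) ∂μ with hφ
  -- φ as an integral over ν
  have hφν : φ = ∫ x, Complex.exp (Complex.I * (t * x)) ∂ν := by
    rw [hφ, hν, integral_map hX.aemeasurable]
    exact (Complex.continuous_exp.comp (by continuity)).aestronglyMeasurable
  -- |φ| ≤ 1
  have hφle : ‖φ‖ ≤ 1 := by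
    rw [hφν]
    calc ‖(∫ x, Complex.exp (Complex.I * (t * x)) ∂ν)‖
        ≤ ∫ x, ‖Complex.exp (Complex.I * (t * x))‖ ∂ν := norm_integral_le_integral_norm _
      _ = 1 := by
          simp only [show ∀ x : ℝ, ‖Complex.exp (Complex.I * (t * x))‖ = 1 from
            fun x => by simpa using norm_exp_I (t * x)]
          simp
  have hφ0 : 0 ≤ ‖φ‖ := norm_nonneg φ
  -- rewrite t in terms of d
  have htd : ∀ x y : ℝ, t * (x - y) = 2 * Real.pi * ((x - y) * d) := by
    intro x y
    rw [hd]; field_simp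
  -- integrands
  set f : ℝ × ℝ → ℝ := fun z => distNearestInt ((z.1 - z.2) * d) ^ 2 with hf
  set g : ℝ × ℝ → ℝ := fun z => Real.cos (t * (z.1 - z.2)) with hg
  have hf_meas : Measurable f := by
    exact ((measurable_distNearestInt.comp
      ((measurable_fst.sub measurable_snd).mul_const d)).pow_const 2)
  have hf_int : Integrable f P := by
    refine (integrable_const (1 / 4 : ℝ)).mono' hf_meas.aestronglyMeasurable ?_
    filter_upwards with z
    simp only [hf]
    rw [Real.norm_eq_abs, abs_of_nonneg (by positivity)]
    have h1 := distNearestInt_le_half ((z.1 - z.2) * d)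
    have h2 := distNearestInt_nonneg ((z.1 - z.2) * d)
    nlinarith
  have hg_cont : Continuous g := by
    apply Real.continuous_cos.comp; continuity
  have hg_int : Integrable g P := by
    refine (integrable_const (1 : ℝ)).mono' hg_cont.aestronglyMeasurable ?_
    filter_upwards with z
    simp only [hg, Real.norm_eq_abs]
    exact Real.abs_cos_le_one _
  -- Hsym as integral over P
  have hHsym : Hsym ν d = ∫ z, f z ∂P := by
    rw [Hsym, hP, integral_prod f hf_int]
  -- |φ|^2 = ∫ g ∂P
  have hsq : ‖φ‖ ^ 2 = ∫ z, g z ∂P := by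
    have hconj : (starRingEnd ℂ) φ = ∫ y, Complex.exp (-Complex.I * (t * y)) ∂ν := by
      rw [hφν, ← integral_conj]
      congr 1; funext y
      rw [← Complex.exp_conj]
      congr 1
      simp [Complex.conj_I]
    have hexp_int : Integrable (fun z : ℝ × ℝ =>
        Complex.exp (Complex.I * (t * z.1)) * Complex.exp (-Complex.I * (t * z.2))) P := by
      refine (integrable_const (1 : ℝ)).mono'
        ((Complex.continuous_exp.comp (by continuity)).mul
          (Complex.continuous_exp.comp (by continuity))).aestronglyMeasurable ?_
      filter_upwards with z
      rw [norm_mul]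
      have h1 : ‖Complex.exp (Complex.I * (t * z.1))‖ = 1 := by simpa using norm_exp_I (t * z.1)
      have h2 : ‖Complex.exp (-Complex.I * (t * z.2))‖ = 1 := by
        rw [Complex.norm_exp]; simp
      rw [h1, h2]; norm_num
    have hmul : (φ * (starRingEnd ℂ) φ) =
        ∫ z : ℝ × ℝ, Complex.exp (Complex.I * (t * z.1)) *
          Complex.exp (-Complex.I * (t * z.2)) ∂P := by
      rw [hconj, hφν, hP, ← integral_prod_mul]
    have hre : (φ * (starRingEnd ℂ) φ).re = ∫ z, g z ∂P := by
      have h := integral_re (𝕜 := ℂ) hexp_int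
      simp only [RCLike.re_to_complex] at h
      rw [hmul, ← h]
      congr 1; funext z
      rw [← Complex.exp_add]
      have : Complex.I * (t * z.1) + -Complex.I * (t * z.2)
          = Complex.I * ((t * (z.1 - z.2) : ℝ) : ℂ) := by push_cast; ring
      rw [this, exp_I_re]
    rw [Complex.sq_norm, ← hre, Complex.mul_conj, Complex.ofReal_re]
  -- pointwise bounds integrated
  have hpt : ∀ z : ℝ × ℝ, 8 * f z ≤ 1 - g z ∧ 1 - g z ≤ 2 * Real.pi ^ 2 * f z := by
    intro z
    have h := cos_bounds ((z.1 - z.2) * d)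
    have hgz : g z = Real.cos (2 * Real.pi * ((z.1 - z.2) * d)) := by
      rw [hg]; simp only; rw [htd z.1 z.2]
    rw [hf]; simp only
    rw [hgz]
    exact h
  have key1 : 8 * Hsym ν d ≤ 1 - ‖φ‖ ^ 2 := by
    rw [hHsym, hsq, ← integral_const_mul]
    have : (1 : ℝ) - ∫ z, g z ∂P = ∫ z, (1 - g z) ∂P := by
      rw [integral_sub (integrable_const 1) hg_int, integral_const]
      simp
    rw [this]
    exact integral_mono (hf_int.const_mul 8) ((integrable_const 1).sub hg_int)
      fun z => (hpt z).1
  have key2 : 1 - ‖φ‖ ^ 2 ≤ 2 * Real.pi ^ 2 * Hsym ν d := by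
    rw [hHsym, hsq, ← integral_const_mul]
    have : (1 : ℝ) - ∫ z, g z ∂P = ∫ z, (1 - g z) ∂P := by
      rw [integral_sub (integrable_const 1) hg_int, integral_const]
      simp
    rw [this]
    exact integral_mono ((integrable_const 1).sub hg_int) (hf_int.const_mul _)
      fun z => (hpt z).2
  constructor
  · nlinarith [key1, hφle, hφ0]
  · nlinarith [key2, hφle, hφ0]
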